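/- Let d ∈ ℕ, let p be a prime, let Λ ⊂ ℤ^d be a finite set, and let a be a natural number with 1 ≤ a < p such that for every nonzero m ∈ Λ one has m₁ + a·m₂ + ⋯ + a^{d−1}·m_d ≢ 0 (mod p). Define points ξ^ν = (ξ^ν₁, …, ξ^ν_d) ∈ 𝕋^d by ξ^ν_j := 2π·{ν·a^{j−1}/p} for ν = 1, …, p, where {x} denotes the fractional part of x. Then for every trigonometric polynomial t ∈ 𝒯(Λ) one has (1/p)·∑_{ν=1}^p t(ξ^ν) = (2π)^{-d}·∫_{𝕋^d} t(x) dx. -/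

import Mathlib

open MeasureTheory Real Finset

noncomputable section

/-- The cube `[0, 2π)^d` representing the torus `𝕋^d`. -/
def torusCube (d : ℕ) : Set (Fin d → ℝ) := Set.univ.pi fun _ => Set.Ico 0 (2 * π)

/-- The trigonometric polynomial with frequencies in `Q` and coefficients `c`. -/
def trigSum {d : ℕ} (Q : Finset (Fin d → ℤ)) (c : (Fin d → ℤ) → ℂ) : (Fin d → ℝ) → ℂ :=
  fun x => ∑ k ∈ Q, c k * Complex.exp (Complex.I * ∑ j, (k j : ℂ) * (x j : ℂ))

/-- `‖f‖_q^q = (2π)^{-d} ∫_{𝕋^d} |f(x)|^q dx`. -/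
def lqNormPow (d : ℕ) (q : ℝ) (f : (Fin d → ℝ) → ℂ) : ℝ :=
  ((2 * π) ^ d)⁻¹ * ∫ x in torusCube d, ‖f x‖ ^ q

open Classical in
/-- The step hyperbolic cross `Q_n`. -/
def hyperCross (d n : ℕ) : Finset (Fin d → ℤ) :=
  (Fintype.piFinset fun _ : Fin d => Finset.Icc (-(2 ^ n : ℤ)) (2 ^ n)).filter
    fun k => ∃ s : Fin d → ℕ, (∑ j, s j) ≤ n ∧
      ∀ j, ((2 ^ s j / 2 : ℕ) : ℤ) ≤ |k j| ∧ |k j| < 2 ^ s j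

/-- sup-norm over the torus. -/
def supNorm (d : ℕ) (f : (Fin d → ℝ) → ℂ) : ℝ := ⨆ x : Fin d → ℝ, ‖f x‖

/-- entropy number `ε_k(A, L_∞)` with centers in `A`. -/
def entropyNum (d : ℕ) (A : Set ((Fin d → ℝ) → ℂ)) (k : ℕ) : ℝ :=
  sInf {ε : ℝ | ∃ y : Fin (2 ^ k) → ((Fin d → ℝ) → ℂ), (∀ j, y j ∈ A) ∧
    ∀ f ∈ A, ∃ j, ∀ x, ‖f x - y j x‖ ≤ ε}

/-- unit `L_q`-ball of `𝒯(Q_n)`. -/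
def trigBall (d : ℕ) (Q : Finset (Fin d → ℤ)) (q : ℝ) : Set ((Fin d → ℝ) → ℂ) :=
  {f | ∃ c : (Fin d → ℤ) → ℂ, f = trigSum Q c ∧ (lqNormPow d q f) ^ (1 / q) ≤ 1}

/-- the points `ξ^ν` built from `a` and `p`. -/
def xiPoint (d p a : ℕ) (ν : ℕ) : Fin d → ℝ :=
  fun j => 2 * π * Int.fract ((ν * a ^ (j : ℕ) : ℝ) / p)

/-- Dirichlet kernel of `Q`. -/
def dirKernel {d : ℕ} (Q : Finset (Fin d → ℤ)) : (Fin d → ℝ) → ℂ :=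
  fun x => ∑ k ∈ Q, Complex.exp (Complex.I * ∑ j, (k j : ℂ) * (x j : ℂ))

theorem single_int (m : ℤ) : ∫ x in Set.Ico (0:ℝ) (2*π), Complex.exp (Complex.I * m * x) =
    if m = 0 then ((2*π : ℝ) : ℂ) else 0 := by
  rcases eq_or_ne m 0 with h | h
  · simp [h, Real.volume_Ico, Real.pi_nonneg, ENNReal.toReal_ofReal,
      mul_nonneg, Real.pi_nonneg, le_of_lt Real.two_pi_pos]
  · rw [if_neg h, MeasureTheory.setIntegral_congr_set MeasureTheory.Ico_ae_eq_Ioc,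
      ← intervalIntegral.integral_of_le (by positivity : (0:ℝ) ≤ 2*π)]
    have hc : Complex.I * m ≠ 0 := by simp [Complex.I_ne_zero, h]
    rw [integral_exp_mul_complex hc]
    have : Complex.exp (Complex.I * m * (2*π : ℝ)) = 1 := by
      rw [show Complex.I * m * ((2*π:ℝ):ℂ) = m * (2*π*Complex.I) by push_cast; ring]
      exact Complex.exp_int_mul_two_pi_mul_I m
    rw [show ((2*π:ℝ):ℂ) = 2*(π:ℝ) by push_cast; ring] at this; simp [this]

theorem cube_int (d : ℕ) (k : Fin d → ℤ) :
    ∫ x in torusCube d, Complex.exp (Complex.I * ∑ j, (k j : ℂ) * (x j : ℂ)) =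
      if k = 0 then (((2*π)^d : ℝ) : ℂ) else 0 := by
  have hmeas : MeasurableSet (torusCube d) :=
    MeasurableSet.univ_pi fun _ => measurableSet_Ico
  have key : ∫ x in torusCube d, Complex.exp (Complex.I * ∑ j, (k j : ℂ) * (x j : ℂ)) =
      ∏ j, ∫ x in Set.Ico (0:ℝ) (2*π), Complex.exp (Complex.I * (k j) * x) := by
    rw [← MeasureTheory.integral_indicator hmeas]
    have : (torusCube d).indicator
        (fun x => Complex.exp (Complex.I * ∑ j, (k j : ℂ) * (x j : ℂ))) =
        fun x => ∏ j, (Set.Ico (0:ℝ) (2*π)).indicator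
          (fun t => Complex.exp (Complex.I * (k j) * t)) (x j) := by
      funext x
      by_cases hx : x ∈ torusCube d
      · rw [Set.indicator_of_mem hx]
        have : ∀ j, x j ∈ Set.Ico (0:ℝ) (2*π) := fun j => hx j (Set.mem_univ j)
        simp only [Set.indicator_of_mem (this _)]
        rw [mul_sum, Complex.exp_sum]
        congr 1; funext j; ring_nf
      · rw [Set.indicator_of_notMem hx]
        have : ∃ j, x j ∉ Set.Ico (0:ℝ) (2*π) := by
          by_contra hcon
          push_neg at hcon
          exact hx fun j _ => hcon j
        obtain ⟨j, hj⟩ := this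
        symm
        exact Finset.prod_eq_zero (Finset.mem_univ j) (Set.indicator_of_notMem hj _)
    rw [this, MeasureTheory.volume_pi, MeasureTheory.integral_fintype_prod_eq_prod (ι := Fin d)
      (fun j => (Set.Ico (0:ℝ) (2*π)).indicator (fun t => Complex.exp (Complex.I * (k j) * t)))]
    exact Finset.prod_congr rfl fun j _ =>
      (MeasureTheory.integral_indicator measurableSet_Ico)
  rw [key]
  rcases eq_or_ne k 0 with h | h
  · subst h
    simp only [single_int, Pi.zero_apply, if_pos rfl, Finset.prod_const, Finset.card_univ,
      Fintype.card_fin]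
    push_cast; ring
  · obtain ⟨j, hj⟩ := Function.ne_iff.mp h
    rw [if_neg h]
    refine Finset.prod_eq_zero (Finset.mem_univ j) ?_
    rw [single_int, if_neg (by simpa using hj)]

theorem term_eq (d p a : ℕ) (hp : 0 < p) (k : Fin d → ℤ) (ν : ℕ) :
    Complex.exp (Complex.I * ∑ j, (k j : ℂ) * ((xiPoint d p a ν j : ℝ) : ℂ)) =
      (Complex.exp ((((∑ j, k j * (a:ℤ) ^ (j:ℕ) : ℤ) : ℝ) / p) * (2 * π * Complex.I))) ^ ν := by
  have hp0 : (p : ℝ) ≠ 0 := Nat.cast_ne_zero.mpr hp.ne'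
  set S : ℤ := ∑ j, k j * (a:ℤ) ^ (j:ℕ) with hS
  set N : ℤ := ∑ j, k j * ⌊(ν * a ^ (j:ℕ) : ℝ) / p⌋ with hN
  have hterm : ∀ j : Fin d, (k j : ℝ) * xiPoint d p a ν j =
      2 * π * ((ν : ℝ) * ((k j : ℝ) * (a:ℝ) ^ (j:ℕ))) / p
        - 2 * π * ((k j : ℝ) * (⌊(ν * a ^ (j:ℕ) : ℝ) / p⌋ : ℝ)) := by
    intro j
    simp only [xiPoint, Int.fract]
    field_simp
  have hreal : (∑ j, (k j : ℝ) * (xiPoint d p a ν j)) =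
      2 * π * ((ν * S : ℝ) / p) - 2 * π * (N : ℝ) := by
    simp only [hterm, Finset.sum_sub_distrib]
    congr 1
    · rw [hS]; push_cast
      simp only [Finset.mul_sum, Finset.sum_div]
      exact Finset.sum_congr rfl fun j _ => by ring
    · rw [hN]; push_cast
      rw [Finset.mul_sum]
  have hcast : (∑ j, (k j : ℂ) * ((xiPoint d p a ν j : ℝ) : ℂ)) =
      (((∑ j, (k j : ℝ) * (xiPoint d p a ν j)) : ℝ) : ℂ) := by push_cast; rfl
  rw [hcast, hreal]
  push_cast
  rw [show Complex.I * (2 * π * (ν * S / p) - 2 * π * N) =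
      (ν : ℂ) * (((S:ℝ) : ℂ) / (p : ℂ) * (2 * π * Complex.I)) + ((-N : ℤ) : ℂ) * (2 * π * Complex.I) by
    push_cast; ring]
  rw [Complex.exp_add, Complex.exp_int_mul_two_pi_mul_I (-N), mul_one, Complex.exp_nat_mul]
  norm_cast

theorem sum_eq (d p a : ℕ) (hp : 0 < p) (k : Fin d → ℤ) :
    ∑ ν ∈ Finset.Icc 1 p, Complex.exp (Complex.I * ∑ j, (k j : ℂ) * ((xiPoint d p a ν j : ℝ) : ℂ)) =
      if (p : ℤ) ∣ ∑ j, k j * (a:ℤ) ^ (j:ℕ) then (p : ℂ) else 0 := by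
  have hp0 : (p : ℂ) ≠ 0 := Nat.cast_ne_zero.mpr hp.ne'
  set S : ℤ := ∑ j, k j * (a:ℤ) ^ (j:ℕ) with hS
  set z : ℂ := Complex.exp ((S : ℂ) / (p : ℂ) * (2 * π * Complex.I)) with hz
  have hterm : ∀ ν, Complex.exp (Complex.I * ∑ j, (k j : ℂ) * ((xiPoint d p a ν j : ℝ) : ℂ)) = z ^ ν :=
    fun ν => term_eq d p a hp k ν
  simp only [hterm]
  have hzp : z ^ p = 1 := by
    rw [hz, ← Complex.exp_nat_mul,
      show (p : ℂ) * ((S : ℂ) / (p : ℂ) * (2 * π * Complex.I)) = S * (2 * π * Complex.I) by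
        field_simp]
    exact Complex.exp_int_mul_two_pi_mul_I S
  by_cases hdvd : (p : ℤ) ∣ S
  · obtain ⟨t, ht⟩ := hdvd
    have hz1 : z = 1 := by
      rw [hz, show (S : ℂ) / (p : ℂ) = (t : ℂ) by rw [ht]; push_cast; field_simp]
      exact Complex.exp_int_mul_two_pi_mul_I t
    rw [if_pos ⟨t, ht⟩]
    simp [hz1, Nat.card_Icc]
  · have hz1 : z ≠ 1 := by
      intro h
      obtain ⟨n, hn⟩ := Complex.exp_eq_one_iff.mp (hz ▸ h)
      have h2 : (2 * (π:ℂ) * Complex.I) ≠ 0 := by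
        simp [Real.pi_ne_zero, Complex.I_ne_zero]
      have hSc : (S : ℂ) / (p : ℂ) = (n : ℂ) := by
        rw [show (n:ℂ) * (2 * π * Complex.I) = n * (2 * ↑π * Complex.I) by ring] at hn
        exact mul_right_cancel₀ h2 hn
      have hr : (S : ℝ) / p = n := by exact_mod_cast hSc
      have hfin : (S : ℝ) = ((p * n : ℤ) : ℝ) := by
        push_cast
        rw [← hr]
        field_simp
      exact hdvd ⟨n, by exact_mod_cast hfin⟩
    rw [if_neg hdvd, ← Finset.Ico_add_one_right_eq_Icc, Finset.sum_Ico_eq_sum_range, Nat.add_sub_cancel]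
    have hh : ∑ i ∈ Finset.range p, z ^ (1 + i) = z * ∑ i ∈ Finset.range p, z ^ i := by
      rw [Finset.mul_sum]
      exact Finset.sum_congr rfl fun i _ => by rw [pow_add, pow_one]
    rw [hh, geom_sum_eq hz1, hzp, sub_self, zero_div, mul_zero]

theorem stmt9 (d : ℕ) (hd : 0 < d) (p : ℕ) (hp : p.Prime) (Λ : Finset (Fin d → ℤ))
    (a : ℕ) (ha1 : 1 ≤ a) (hap : a < p)
    (ha : ∀ mm ∈ Λ, mm ≠ 0 → ¬ ((p : ℤ) ∣ ∑ j, mm j * (a : ℤ) ^ (j : ℕ))) :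
    ∀ c : (Fin d → ℤ) → ℂ,
      (1 / (p : ℂ)) * ∑ ν ∈ Finset.Icc 1 p, trigSum Λ c (xiPoint d p a ν) =
        ((((2 * π) ^ d)⁻¹ : ℝ) : ℂ) * ∫ x in torusCube d, trigSum Λ c x := by
  intro c
  have hp0 : (p : ℂ) ≠ 0 := Nat.cast_ne_zero.mpr hp.pos.ne'
  have h2pi : ((2 * π) ^ d : ℝ) ≠ 0 := by positivity
  have hcont : ∀ k : Fin d → ℤ,
      Continuous (fun x : Fin d → ℝ => c k * Complex.exp (Complex.I * ∑ j, (k j : ℂ) * (x j : ℂ))) := by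
    intro k; fun_prop
  have hint : ∀ k ∈ Λ, IntegrableOn
      (fun x : Fin d → ℝ => c k * Complex.exp (Complex.I * ∑ j, (k j : ℂ) * (x j : ℂ)))
      (torusCube d) volume := by
    intro k _
    have hcpt : IsCompact (Set.univ.pi fun _ : Fin d => Set.Icc (0:ℝ) (2*π)) :=
      isCompact_univ_pi fun _ => isCompact_Icc
    exact ((hcont k).continuousOn.integrableOn_compact hcpt).mono_set
      (Set.pi_mono fun i _ => Set.Ico_subset_Icc_self)
  have hRHS : ∫ x in torusCube d, trigSum Λ c x =
      ∑ k ∈ Λ, c k * (if k = 0 then (((2*π)^d : ℝ) : ℂ) else 0) := by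
    unfold trigSum
    rw [MeasureTheory.integral_finset_sum Λ hint]
    exact Finset.sum_congr rfl fun k _ => by
      rw [MeasureTheory.integral_const_mul, cube_int]
  have hLHS : ∑ ν ∈ Finset.Icc 1 p, trigSum Λ c (xiPoint d p a ν) =
      ∑ k ∈ Λ, c k * (if (p : ℤ) ∣ ∑ j, k j * (a:ℤ) ^ (j:ℕ) then (p : ℂ) else 0) := by
    unfold trigSum
    rw [Finset.sum_comm]
    exact Finset.sum_congr rfl fun k _ => by
      rw [← Finset.mul_sum, sum_eq d p a hp.pos k]
  rw [hLHS, hRHS, Finset.mul_sum, Finset.mul_sum]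
  refine Finset.sum_congr rfl fun k hk => ?_
  by_cases hk0 : k = 0
  · subst hk0
    rw [if_pos (by simp), if_pos rfl, Complex.ofReal_inv]
    have h2 : (((2*π)^d : ℝ) : ℂ) ≠ 0 := Complex.ofReal_ne_zero.mpr h2pi
    field_simp
  · rw [if_neg (ha k hk hk0), if_neg hk0]
    ring


end
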